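/- Let x, y be generators of a grid diagram of size N, and let D, D′ ∈ 𝒟(x,y). Then μ(D) − 2·Σ_i n_{O_i}(D) = μ(D′) − 2·Σ_i n_{O_i}(D′) and Σ_i (n_{X_i}(D) − n_{O_i}(D)) = Σ_i (n_{X_i}(D′) − n_{O_i}(D′)). Hence the relative Maslov grading M(x,y) := μ(D) − 2·Σ_i n_{O_i}(D) and the relative Alexander grading A(x,y) := Σ_i (n_{X_i}(D) − n_{O_i}(D)) do not depend on the choice of D ∈ 𝒟(x,y). -/

import Mathlib

/-- A generator of a grid diagram of size `N`: a permutation of `ℤ/N`. -/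
abbrev GridGen (N : ℕ) := Equiv.Perm (ZMod N)

/-- The alternating corner sum of a 2-chain `D` at the lattice point `(a, b)`. -/
def cornerSum (N : ℕ) (D : ZMod N → ZMod N → ℤ) (a b : ZMod N) : ℤ :=
  D a b - D (a - 1) b - D a (b - 1) + D (a - 1) (b - 1)

/-- `D` is a domain from the generator `x` to the generator `y`: the alternating
corner sum at a lattice point `p` is `1` if `p ∈ x \ y`, `-1` if `p ∈ y \ x`, and
`0` otherwise. -/
def IsGridDomain (N : ℕ) (x y : GridGen N) (D : ZMod N → ZMod N → ℤ) : Prop :=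
  ∀ a b : ZMod N, cornerSum N D a b =
    if x a = b ∧ y a ≠ b then 1 else if y a = b ∧ x a ≠ b then -1 else 0

/-- The point measure `n_p(D)` at the lattice point `p = (a, b)`: the average of
the values of `D` on the four squares around `p`. -/
def gridNp (N : ℕ) (D : ZMod N → ZMod N → ℤ) (a b : ZMod N) : ℚ :=
  ((D a b : ℚ) + (D (a - 1) b : ℚ) + (D a (b - 1) : ℚ) + (D (a - 1) (b - 1) : ℚ)) / 4

/-- The Maslov index `μ(D) = Σ_i (n_{(i, x i)}(D) + n_{(i, y i)}(D))`. -/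
def maslovIndex (N : ℕ) [NeZero N] (x y : GridGen N) (D : ZMod N → ZMod N → ℤ) : ℚ :=
  ∑ i : ZMod N, (gridNp N D i (x i) + gridNp N D i (y i))

/-- A function on `ZMod N` invariant under subtracting `1` is constant. -/
lemma const_of_sub_one {N : ℕ} [NeZero N] (c : ZMod N → ℤ)
    (hc : ∀ a, c a = c (a - 1)) : ∀ a, c a = c 0 := by
  intro a
  have key : ∀ k : ℕ, c a = c (a - (k : ZMod N)) := by
    intro k
    induction k with
    | zero => simp
    | succ n ih =>
      rw [ih, hc (a - (n : ZMod N))]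
      congr 1
      push_cast
      ring
  have h := key a.val
  rwa [ZMod.natCast_val, ZMod.cast_id, sub_self] at h

/-- For any two domains `D, D' ∈ 𝒟(x,y)` of a grid diagram,
`μ(D) − 2·Σᵢ n_{Oᵢ}(D) = μ(D') − 2·Σᵢ n_{Oᵢ}(D')` and
`Σᵢ (n_{Xᵢ}(D) − n_{Oᵢ}(D)) = Σᵢ (n_{Xᵢ}(D') − n_{Oᵢ}(D'))`; hence the relative
Maslov and Alexander gradings are independent of the choice of domain. -/
theorem relative_gradings_well_defined (N : ℕ) [NeZero N] (hN : 2 ≤ N)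
    (σO σX : GridGen N) (hσ : ∀ i : ZMod N, σO i ≠ σX i)
    (x y : GridGen N) (D D' : ZMod N → ZMod N → ℤ)
    (hD : IsGridDomain N x y D) (hD' : IsGridDomain N x y D') :
    maslovIndex N x y D - 2 * ∑ i : ZMod N, (D i (σO i) : ℚ) =
        maslovIndex N x y D' - 2 * ∑ i : ZMod N, (D' i (σO i) : ℚ) ∧
      (∑ i : ZMod N, (D i (σX i) - D i (σO i))) =
        ∑ i : ZMod N, (D' i (σX i) - D' i (σO i)) := by
  classical
  set E : ZMod N → ZMod N → ℤ := fun a b => D a b - D' a b with hEdef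
  have hcorner : ∀ a b : ZMod N,
      E a b - E (a - 1) b - E a (b - 1) + E (a - 1) (b - 1) = 0 := by
    intro a b
    have h1 := hD a b
    have h2 := hD' a b
    simp only [cornerSum] at h1 h2
    have h3 := h1.trans h2.symm
    simp only [hEdef]
    linarith
  -- column differences are independent of the column
  have hcol : ∀ a b : ZMod N, E a b - E a (b - 1) = E 0 b - E 0 (b - 1) := by
    intro a b
    exact const_of_sub_one (fun a => E a b - E a (b - 1))
      (fun a => by
        show E a b - E a (b - 1) = E (a - 1) b - E (a - 1) (b - 1)
        have := hcorner a b; linarith) a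
  have hsplit : ∀ a b : ZMod N, E a b = E a 0 + E 0 b - E 0 0 := by
    intro a b
    have h := const_of_sub_one (fun b => E a b - E 0 b)
      (fun b => by
        show E a b - E 0 b = E a (b - 1) - E 0 (b - 1)
        have := hcol a b; linarith) b
    try simp only at h
    linarith
  set f : ZMod N → ℤ := fun a => E a 0 - E 0 0 with hf
  set g : ZMod N → ℤ := fun b => E 0 b with hg
  have hfg : ∀ a b : ZMod N, E a b = f a + g b := by
    intro a b
    simp only [hf, hg]
    linarith [hsplit a b]
  -- reindexing sums
  have sum_shiftQ : ∀ c : ZMod N → ℤ, ∑ i : ZMod N, (c (i - 1) : ℚ) = ∑ i : ZMod N, (c i : ℚ) :=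
    fun c => Equiv.sum_comp (Equiv.subRight (1 : ZMod N)) (fun i => (c i : ℚ))
  have sum_permQ : ∀ (e : Equiv.Perm (ZMod N)) (c : ZMod N → ℤ),
      ∑ i : ZMod N, (c (e i) : ℚ) = ∑ i : ZMod N, (c i : ℚ) :=
    fun e c => Equiv.sum_comp e (fun i => (c i : ℚ))
  have sum_permshiftQ : ∀ (e : Equiv.Perm (ZMod N)) (c : ZMod N → ℤ),
      ∑ i : ZMod N, (c (e i - 1) : ℚ) = ∑ i : ZMod N, (c i : ℚ) :=
    fun e c => Equiv.sum_comp (e.trans (Equiv.subRight (1 : ZMod N))) (fun i => (c i : ℚ))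
  constructor
  · -- Maslov part
    have hnp : ∀ a b : ZMod N, gridNp N D a b - gridNp N D' a b
        = ((f a : ℚ) + (f (a - 1) : ℚ) + (g b : ℚ) + (g (b - 1) : ℚ)) / 2 := by
      intro a b
      have e1 := hfg a b
      have e2 := hfg (a - 1) b
      have e3 := hfg a (b - 1)
      have e4 := hfg (a - 1) (b - 1)
      simp only [hEdef] at e1 e2 e3 e4
      have q1 : (D a b : ℚ) - (D' a b : ℚ) = (f a : ℚ) + (g b : ℚ) := by exact_mod_cast e1
      have q2 : (D (a-1) b : ℚ) - (D' (a-1) b : ℚ) = (f (a-1) : ℚ) + (g b : ℚ) := by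
        exact_mod_cast e2
      have q3 : (D a (b-1) : ℚ) - (D' a (b-1) : ℚ) = (f a : ℚ) + (g (b-1) : ℚ) := by
        exact_mod_cast e3
      have q4 : (D (a-1) (b-1) : ℚ) - (D' (a-1) (b-1) : ℚ) = (f (a-1) : ℚ) + (g (b-1) : ℚ) := by
        exact_mod_cast e4
      simp only [gridNp]
      field_simp
      linarith
    have hmu : maslovIndex N x y D - maslovIndex N x y D'
        = 2 * ∑ i : ZMod N, (f i : ℚ) + 2 * ∑ i : ZMod N, (g i : ℚ) := by
      have : maslovIndex N x y D - maslovIndex N x y D'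
          = ∑ i : ZMod N, ((gridNp N D i (x i) - gridNp N D' i (x i))
            + (gridNp N D i (y i) - gridNp N D' i (y i))) := by
        simp only [maslovIndex, ← Finset.sum_sub_distrib]
        apply Finset.sum_congr rfl
        intro i _
        ring
      rw [this]
      calc ∑ i : ZMod N, ((gridNp N D i (x i) - gridNp N D' i (x i))
            + (gridNp N D i (y i) - gridNp N D' i (y i)))
          = ∑ i : ZMod N, (((f i : ℚ) + (f (i-1) : ℚ) + (g (x i) : ℚ) + (g (x i - 1) : ℚ)) / 2
            + ((f i : ℚ) + (f (i-1) : ℚ) + (g (y i) : ℚ) + (g (y i - 1) : ℚ)) / 2) := by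
            apply Finset.sum_congr rfl
            intro i _
            rw [hnp i (x i), hnp i (y i)]
        _ = 2 * ∑ i : ZMod N, (f i : ℚ) + 2 * ∑ i : ZMod N, (g i : ℚ) := by
            rw [Finset.sum_add_distrib, ← Finset.sum_div, ← Finset.sum_div]
            simp only [Finset.sum_add_distrib]
            rw [sum_shiftQ f, sum_permQ x g, sum_permQ y g, sum_permshiftQ x g,
              sum_permshiftQ y g]
            ring
    have hO : (∑ i : ZMod N, (D i (σO i) : ℚ)) - ∑ i : ZMod N, (D' i (σO i) : ℚ)
        = ∑ i : ZMod N, (f i : ℚ) + ∑ i : ZMod N, (g i : ℚ) := by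
      rw [← Finset.sum_sub_distrib]
      have : ∀ i : ZMod N, (D i (σO i) : ℚ) - (D' i (σO i) : ℚ)
          = (f i : ℚ) + (g (σO i) : ℚ) := by
        intro i
        have := hfg i (σO i)
        simp only [hEdef] at this
        exact_mod_cast this
      rw [Finset.sum_congr rfl (fun i _ => this i), Finset.sum_add_distrib, sum_permQ σO g]
    linarith
  · -- Alexander part
    have key : ∑ i : ZMod N, (E i (σX i) - E i (σO i)) = 0 := by
      have : ∀ i : ZMod N, E i (σX i) - E i (σO i) = g (σX i) - g (σO i) := by
        intro i
        rw [hfg i (σX i), hfg i (σO i)]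
        ring
      rw [Finset.sum_congr rfl (fun i _ => this i), Finset.sum_sub_distrib,
        Equiv.sum_comp σX g, Equiv.sum_comp σO g, sub_self]
    have expand : ∑ i : ZMod N, (E i (σX i) - E i (σO i))
        = (∑ i : ZMod N, (D i (σX i) - D i (σO i)))
          - ∑ i : ZMod N, (D' i (σX i) - D' i (σO i)) := by
      rw [← Finset.sum_sub_distrib]
      apply Finset.sum_congr rfl
      intro i _
      simp only [hEdef]
      ring
    rw [expand] at key
    linarith
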